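/- Let α ∈ ℕ₀⁴ with α₁ ≡ α₂ ≡ α₃ ≡ α₄ (mod 2), set b_i = (α_i + α₄)/2 for i = 1,2,3 and b₀ = (α₂+α₃)/2, b₁ = (α₁+α₄)/2. Then the double sum Σ_{i=0}^{⌊α₄/2⌋} Σ_{j=0}^{⌊α₃/2⌋} (-α₄)_{2i} (-α₃)_{2j} (κ)_{i+j} / (i! j! (1/2 - b₁)_i (1/2 - b₀)_j (1/2 - b₃)_{i+j} 2^{2i+2j}) equals [(κ+1/2)_{b₀} (1/2)_{b₂} / ((1/2)_{b₀} (κ+1/2)_{b₂})] · Σ_{i=0}^{⌊α₄/2⌋} (-α₄/2)_i ((1-α₄)/2)_i (κ)_i (-κ-b₁-b₀)_i / (i! (1/2 - b₁)_i (1/2 - b₂)_i (1/2 - b₃)_i), where b₂ = (α₂+α₄)/2. -/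

import Mathlib

noncomputable def poch (x : ℝ) (n : ℕ) : ℝ := ∏ i ∈ Finset.range n, (x + i)

open Finset

lemma poch_zero (x : ℝ) : poch x 0 = 1 := by simp [poch]

lemma poch_one (x : ℝ) : poch x 1 = x := by simp [poch]

lemma poch_succ (x : ℝ) (n : ℕ) : poch x (n+1) = poch x n * (x + n) := by
  simp [poch, Finset.prod_range_succ]

lemma poch_succ_left (x : ℝ) (n : ℕ) : poch x (n+1) = x * poch (x+1) n := by
  induction n with
  | zero => simp [poch]
  | succ n ih =>
      rw [poch_succ, ih, poch_succ]
      push_cast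
      ring

lemma poch_add (x : ℝ) (m n : ℕ) : poch x (m+n) = poch x m * poch (x + m) n := by
  induction n with
  | zero => simp [poch_zero]
  | succ n ih =>
      rw [← Nat.add_assoc, poch_succ, ih, poch_succ]
      push_cast
      ring

lemma poch_top (x : ℝ) (r : ℕ) : x * poch (x+1) r = poch x r * (x + r) := by
  rw [← poch_succ_left, poch_succ]

lemma poch_reverse (x : ℝ) (n : ℕ) : poch x n = (-1)^n * poch (1 - x - n) n := by
  induction n generalizing x with
  | zero => simp [poch_zero]
  | succ n ih =>
      rw [poch_succ, ih, poch_succ_left]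
      push_cast
      ring_nf

lemma poch_sub (x : ℝ) (r : ℕ) :
    poch (x+1) r - poch x r = r * poch (x+1) (r-1) := by
  cases r with
  | zero => simp [poch_zero]
  | succ r =>
      rw [poch_succ, poch_succ_left]
      simp only [Nat.add_sub_cancel]
      push_cast
      ring

lemma poch_shift (c : ℝ) (l n : ℕ) :
    poch (c - l) n * poch (1 - c - n) l = poch c n * poch (1 - c) l := by
  have h1 : poch (c - l) n = (-1)^n * poch ((1 - c - n) + l) n := by
    rw [poch_reverse (c - (l:ℝ)) n]; ring_nf
  have h2 : poch c n = (-1)^n * poch (1 - c - n) n := poch_reverse _ n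
  have h3 : poch ((1:ℝ) - c - n) (l + n) = poch (1 - c - n) l * poch ((1 - c - n) + l) n :=
    poch_add _ l n
  have h4 : poch ((1:ℝ) - c - n) (n + l) = poch (1 - c - n) n * poch (1 - c) l := by
    have := poch_add ((1:ℝ) - c - n) n l
    have e : (1:ℝ) - c - n + n = 1 - c := by ring
    rwa [e] at this
  rw [h1, h2]
  rw [show l + n = n + l from Nat.add_comm l n] at h3
  rw [h4] at h3
  linear_combination (-(-1:ℝ)^n) * h3

lemma poch_ne_zero {x : ℝ} (h : ∀ i : ℕ, i < n → x + i ≠ 0) : poch x n ≠ 0 := by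
  unfold poch
  exact Finset.prod_ne_zero_iff.mpr (fun i hi => h i (Finset.mem_range.mp hi))

lemma poch_pos {x : ℝ} (h : 0 < x) (n : ℕ) : 0 < poch x n := by
  unfold poch
  exact Finset.prod_pos (fun i _ => by positivity)

lemma poch_half_ne_zero (b : ℕ) (n : ℕ) : poch ((1:ℝ)/2 - b) n ≠ 0 := by
  apply poch_ne_zero
  intro i _ h
  have : (1:ℝ) + 2*i = 2*b := by linarith
  have : (1:ℤ) + 2*i = 2*b := by exact_mod_cast this
  omega

lemma poch_double (x : ℝ) (i : ℕ) :
    poch x (2*i) = 4^i * poch (x/2) i * poch ((x+1)/2) i := by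
  induction i with
  | zero => simp [poch_zero]
  | succ i ih =>
      have : 2*(i+1) = 2*i + 1 + 1 := by ring
      rw [this, poch_succ, poch_succ, ih, poch_succ, poch_succ]
      push_cast
      ring

lemma poch_neg_nat (m i : ℕ) (h : i ≤ m) :
    poch (-(m:ℝ)) i = (-1)^i * (Nat.factorial i) * (m.choose i) := by
  induction i with
  | zero => simp [poch_zero]
  | succ i ih =>
      have hi : i ≤ m := Nat.le_of_succ_le h
      rw [poch_succ, ih hi]
      have key : (m.choose (i+1) : ℝ) * ((i:ℝ)+1) = (m.choose i : ℝ) * ((m:ℝ) - i) := by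
        have h0 := congrArg (Nat.cast : ℕ → ℝ) (Nat.choose_succ_right_eq m i)
        push_cast [Nat.cast_sub hi] at h0
        linarith [h0]
      have hfac : (Nat.factorial (i+1) : ℝ) = (Nat.factorial i) * ((i:ℝ)+1) := by
        rw [Nat.factorial_succ]; push_cast; ring
      rw [hfac]
      push_cast
      linear_combination ((-1:ℝ)^i * (Nat.factorial i : ℝ)) * key

lemma pascal_split (n : ℕ) (f : ℕ → ℝ) :
    ∑ i ∈ range (n+2), ((n+1).choose i : ℝ) * f i
      = ∑ i ∈ range (n+1), (n.choose i : ℝ) * (f i + f (i+1)) := by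
  have peel : ∑ i ∈ range (n+2), ((n+1).choose i : ℝ) * f i
      = ((n+1).choose 0 : ℝ) * f 0 + ∑ i ∈ range (n+1), ((n+1).choose (i+1) : ℝ) * f (i+1) := by
    rw [Finset.sum_range_succ' (fun i => ((n+1).choose i : ℝ) * f i) (n+1)]
    ring
  rw [peel]
  have expand : ∀ i ∈ range (n+1), ((n+1).choose (i+1) : ℝ) * f (i+1)
      = (n.choose i : ℝ) * f (i+1) + (n.choose (i+1) : ℝ) * f (i+1) := by
    intro i _
    rw [Nat.choose_succ_succ]
    push_cast
    ring
  rw [Finset.sum_congr rfl expand, Finset.sum_add_distrib]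
  have shift : ∑ i ∈ range (n+1), (n.choose (i+1) : ℝ) * f (i+1)
      = ∑ i ∈ range (n+1), (n.choose i : ℝ) * f i - (n.choose 0 : ℝ) * f 0 := by
    have h1 : ∑ i ∈ range (n+2), (n.choose i : ℝ) * f i
        = (n.choose 0 : ℝ) * f 0 + ∑ i ∈ range (n+1), (n.choose (i+1) : ℝ) * f (i+1) := by
      rw [Finset.sum_range_succ' (fun i => (n.choose i : ℝ) * f i) (n+1)]
      ring
    have h2 : ∑ i ∈ range (n+2), (n.choose i : ℝ) * f i
        = ∑ i ∈ range (n+1), (n.choose i : ℝ) * f i := by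
      rw [Finset.sum_range_succ]
      simp [Nat.choose_succ_self]
    rw [h2] at h1
    linarith
  rw [shift]
  simp only [Nat.choose_zero_right, Nat.cast_one]
  rw [Finset.sum_congr rfl (fun i _ => by ring : ∀ i ∈ range (n+1),
    (n.choose i : ℝ) * (f i + f (i+1)) = (n.choose i : ℝ) * f i + (n.choose i : ℝ) * f (i+1))]
  rw [Finset.sum_add_distrib]
  ring

lemma tri (M : ℕ) (f : ℕ → ℕ → ℝ) :
    ∑ k ∈ range (M+1), ∑ j ∈ range (M+1-k), f k j
      = ∑ s ∈ range (M+1), ∑ k ∈ range (s+1), f k (s-k) := by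
  rw [Finset.sum_sigma', Finset.sum_sigma']
  refine Finset.sum_nbij' (fun x => ⟨x.1 + x.2, x.1⟩) (fun x => ⟨x.2, x.1 - x.2⟩) ?_ ?_ ?_ ?_ ?_ <;>
    simp only [Finset.mem_sigma, Finset.mem_range, Sigma.forall] <;>
    intro a b h
  · omega
  · omega
  · have hb : a + b - a = b := by omega
    rw [hb]
  · have ha : b + (a - b) = a := by omega
    rw [ha]
  · have hb : a + b - a = b := by omega
    rw [hb]

lemma choose_mul_choose (m k j : ℕ) (h : k + j ≤ m) :
    (m.choose k) * ((m-k).choose j) = (m.choose (k+j)) * ((k+j).choose k) := by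
  have := Nat.choose_mul (n := m) (k := k + j) (s := k) (Nat.le_add_right k j)
  rw [Nat.add_sub_cancel_left] at this
  omega

lemma AV : ∀ (n : ℕ) (B C : ℝ),
    ∑ i ∈ range (n+1), (-1:ℝ)^i * (n.choose i : ℝ) * poch B i * poch (C+i) (n-i)
      = poch (C-B) n := by
  intro n
  induction n with
  | zero => intro B C; simp [poch_zero]
  | succ n ih =>
      intro B C
      have lhs_eq : ∑ i ∈ range (n+2), (-1:ℝ)^i * ((n+1).choose i : ℝ) * poch B i * poch (C+i) (n+1-i)
          = ∑ i ∈ range (n+2), ((n+1).choose i : ℝ) * ((-1:ℝ)^i * poch B i * poch (C+i) (n+1-i)) :=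
        Finset.sum_congr rfl (fun i _ => by ring)
      rw [lhs_eq, pascal_split n (fun i => (-1:ℝ)^i * poch B i * poch (C+i) (n+1-i))]
      push_cast
      have step : ∀ i ∈ range (n+1),
          (n.choose i : ℝ) * ((-1:ℝ)^i * poch B i * poch (C+(i:ℝ)) (n+1-i)
            + (-1:ℝ)^(i+1) * poch B (i+1) * poch (C+((i:ℝ)+1)) (n-i))
          = (C-B) * ((-1:ℝ)^i * (n.choose i : ℝ) * poch B i * poch ((C+1)+(i:ℝ)) (n-i)) := by
        intro i hi
        have hi' : i ≤ n := by simpa [Nat.lt_succ_iff] using Finset.mem_range.mp hi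
        have h1 : n+1-i = (n-i)+1 := by omega
        rw [h1, poch_succ_left (C+(i:ℝ)) (n-i), poch_succ B i]
        have e1 : (C+(i:ℝ))+1 = (C+1)+(i:ℝ) := by ring
        have e2 : C+((i:ℝ)+1) = (C+1)+(i:ℝ) := by ring
        rw [e1, e2]
        ring
      rw [Finset.sum_congr rfl step, ← Finset.mul_sum, ih B (C+1)]
      have e3 : C+1-B = (C-B)+1 := by ring
      rw [e3, ← poch_succ_left]

lemma PS : ∀ (n : ℕ) (a b c : ℝ),
    ∑ i ∈ range (n+1), (n.choose i : ℝ) * poch a i * poch b i *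
        poch (c+i) (n-i) * poch (c-a-b) (n-i)
      = poch (c-a) n * poch (c-b) n := by
  intro n
  induction n using Nat.strong_induction_on with
  | _ n ih =>
    match n with
    | 0 => intro a b c; simp [poch_zero]
    | 1 =>
        intro a b c
        rw [Finset.sum_range_succ, Finset.sum_range_succ, Finset.sum_range_zero]
        simp [poch_zero, poch_one]
        ring
    | (n+2) =>
        intro a b c
        have ih1 := ih (n+1) (by omega)
        have ih0 := ih n (by omega)
        -- pascal split
        have lhs_eq : ∑ i ∈ range (n+3), ((n+2).choose i : ℝ) * poch a i * poch b i *
              poch (c+i) (n+2-i) * poch (c-a-b) (n+2-i)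
            = ∑ i ∈ range (n+3), ((n+2).choose i : ℝ) * (poch a i * poch b i *
              poch (c+i) (n+2-i) * poch (c-a-b) (n+2-i)) :=
          Finset.sum_congr rfl (fun i _ => by ring)
        rw [lhs_eq, pascal_split (n+1) (fun i => poch a i * poch b i *
              poch (c+i) (n+2-i) * poch (c-a-b) (n+2-i))]
        push_cast
        -- pointwise: f i + f (i+1) = (c-a)(c-b) * T1 i + (n+1) * T2 i
        have step : ∀ i ∈ range (n+2),
            ((n+1).choose i : ℝ) * (poch a i * poch b i * poch (c+(i:ℝ)) (n+2-i) * poch (c-a-b) (n+2-i)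
              + poch a (i+1) * poch b (i+1) * poch (c+((i:ℝ)+1)) (n+1-i) * poch (c-a-b) (n+1-i))
            = (c-a)*(c-b) * (((n+1).choose i : ℝ) * poch a i * poch b i *
                  poch ((c+1)+(i:ℝ)) (n+1-i) * poch (c-a-b) (n+1-i))
              + ((n:ℝ)+1) * (((n+1).choose i : ℝ) * poch a i * poch b i *
                  (c+(i:ℝ)) * poch ((c+1)+(i:ℝ)) (n+1-i) * poch (c-a-b) (n+1-i)) := by
          intro i hi
          have hi' : i ≤ n+1 := by simpa [Nat.lt_succ_iff] using Finset.mem_range.mp hi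
          have h1 : n+2-i = (n+1-i)+1 := by omega
          rw [h1, poch_succ_left (c+(i:ℝ)) (n+1-i), poch_succ (c-a-b) (n+1-i),
            poch_succ a i, poch_succ b i]
          have e1 : (c+(i:ℝ))+1 = (c+1)+(i:ℝ) := by ring
          have e2 : c+((i:ℝ)+1) = (c+1)+(i:ℝ) := by ring
          have e3 : ((n+1-i : ℕ) : ℝ) = (n:ℝ)+1-i := by
            have : i ≤ n+1 := hi'
            push_cast [Nat.cast_sub this]
            ring
          rw [e1, e2, e3]
          ring
        rw [Finset.sum_congr rfl step, Finset.sum_add_distrib, ← Finset.mul_sum, ← Finset.mul_sum]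
        -- second sum: S2 = (c+n+1) * W(n+1)
        have s2 : ∑ i ∈ range (n+2), ((n+1).choose i : ℝ) * poch a i * poch b i *
              (c+(i:ℝ)) * poch ((c+1)+(i:ℝ)) (n+1-i) * poch (c-a-b) (n+1-i)
            = (c+(n:ℝ)+1) * (poch (c-a) (n+1) * poch (c-b) (n+1)) := by
          have conv1 : ∀ i ∈ range (n+2), ((n+1).choose i : ℝ) * poch a i * poch b i *
                (c+(i:ℝ)) * poch ((c+1)+(i:ℝ)) (n+1-i) * poch (c-a-b) (n+1-i)
              = (c+(n:ℝ)+1) * (((n+1).choose i : ℝ) * poch a i * poch b i *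
                poch (c+(i:ℝ)) (n+1-i) * poch (c-a-b) (n+1-i)) := by
            intro i hi
            have hi' : i ≤ n+1 := by simpa [Nat.lt_succ_iff] using Finset.mem_range.mp hi
            have e1 : (c+(i:ℝ))+1 = (c+1)+(i:ℝ) := by ring
            have htop := poch_top (c+(i:ℝ)) (n+1-i)
            rw [e1] at htop
            have e3 : (c+(i:ℝ)) + ((n+1-i : ℕ) : ℝ) = c+(n:ℝ)+1 := by
              push_cast [Nat.cast_sub hi']
              ring
            rw [e3] at htop
            calc ((n+1).choose i : ℝ) * poch a i * poch b i *
                (c+(i:ℝ)) * poch ((c+1)+(i:ℝ)) (n+1-i) * poch (c-a-b) (n+1-i)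
                = ((n+1).choose i : ℝ) * poch a i * poch b i *
                  ((c+(i:ℝ)) * poch ((c+1)+(i:ℝ)) (n+1-i)) * poch (c-a-b) (n+1-i) := by ring
              _ = ((n+1).choose i : ℝ) * poch a i * poch b i *
                  (poch (c+(i:ℝ)) (n+1-i) * (c+(n:ℝ)+1)) * poch (c-a-b) (n+1-i) := by rw [htop]
              _ = (c+(n:ℝ)+1) * (((n+1).choose i : ℝ) * poch a i * poch b i *
                  poch (c+(i:ℝ)) (n+1-i) * poch (c-a-b) (n+1-i)) := by ring
          rw [Finset.sum_congr rfl conv1, ← Finset.mul_sum]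
          congr 1
          exact ih1 a b c
        rw [s2]
        -- first sum: S1 = W(n+1) + (n+1)(c-a-b) * W(n, c+1)
        have s1 : ∑ i ∈ range (n+2), ((n+1).choose i : ℝ) * poch a i * poch b i *
              poch ((c+1)+(i:ℝ)) (n+1-i) * poch (c-a-b) (n+1-i)
            = poch (c-a) (n+1) * poch (c-b) (n+1)
              + ((n:ℝ)+1) * (c-a-b) * (poch (c+1-a) n * poch (c+1-b) n) := by
          have split : ∀ i ∈ range (n+2), ((n+1).choose i : ℝ) * poch a i * poch b i *
                poch ((c+1)+(i:ℝ)) (n+1-i) * poch (c-a-b) (n+1-i)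
              = ((n+1).choose i : ℝ) * poch a i * poch b i *
                poch (c+(i:ℝ)) (n+1-i) * poch (c-a-b) (n+1-i)
                + (((n+1).choose i : ℕ) * (n+1-i) : ℕ) * (poch a i * poch b i *
                    poch ((c+1)+(i:ℝ)) (n-i) * poch (c-a-b) (n+1-i)) := by
            intro i hi
            have hi' : i ≤ n+1 := by simpa [Nat.lt_succ_iff] using Finset.mem_range.mp hi
            have hsub := poch_sub (c+(i:ℝ)) (n+1-i)
            have e1 : (c+(i:ℝ))+1 = (c+1)+(i:ℝ) := by ring
            rw [e1] at hsub
            have e2 : n+1-i-1 = n-i := by omega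
            rw [e2] at hsub
            have : poch ((c+1)+(i:ℝ)) (n+1-i) = poch (c+(i:ℝ)) (n+1-i)
                + ((n+1-i : ℕ) : ℝ) * poch ((c+1)+(i:ℝ)) (n-i) := by linarith
            rw [this]
            push_cast
            ring
          rw [Finset.sum_congr rfl split, Finset.sum_add_distrib]
          congr 1
          · exact ih1 a b c
          · -- the D-term
            have key : ∀ i, ((n+1).choose i) * (n+1-i) = (n+1) * (n.choose i) := by
              intro i
              rcases Nat.lt_or_ge i (n+2) with h | h
              · have h1 := Nat.choose_succ_right_eq (n+1) i
                have h2 := Nat.add_one_mul_choose_eq n i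
                omega
              · have h1 : (n+1).choose i = 0 := Nat.choose_eq_zero_of_lt (by omega)
                have h2 : n.choose i = 0 := Nat.choose_eq_zero_of_lt (by omega)
                rw [h1, h2]; simp
            have conv2 : ∀ i ∈ range (n+2),
                ((((n+1).choose i : ℕ) * (n+1-i) : ℕ) : ℝ) * (poch a i * poch b i *
                    poch ((c+1)+(i:ℝ)) (n-i) * poch (c-a-b) (n+1-i))
                = ((n:ℝ)+1) * ((n.choose i : ℝ) * (poch a i * poch b i *
                    poch ((c+1)+(i:ℝ)) (n-i) * poch (c-a-b) (n+1-i))) := by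
              intro i _
              rw [key i]
              push_cast
              ring
            rw [Finset.sum_congr rfl conv2, ← Finset.mul_sum]
            -- drop i = n+1 term (choose = 0), then use bottom split of (c-a-b)
            rw [Finset.sum_range_succ]
            simp only [Nat.choose_succ_self, Nat.cast_zero]
            have drop : (0:ℝ) * (poch a (n+1) * poch b (n+1) *
                poch ((c+1)+((n+1:ℕ):ℝ)) (n-(n+1)) * poch (c-a-b) (n+1-(n+1))) = 0 := by ring
            rw [drop, add_zero]
            have conv3 : ∀ i ∈ range (n+1), (n.choose i : ℝ) * (poch a i * poch b i *
                  poch ((c+1)+(i:ℝ)) (n-i) * poch (c-a-b) (n+1-i))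
                = (c-a-b) * ((n.choose i : ℝ) * poch a i * poch b i *
                  poch ((c+1)+(i:ℝ)) (n-i) * poch ((c+1)-a-b) (n-i)) := by
              intro i hi
              have hi' : i ≤ n := by simpa [Nat.lt_succ_iff] using Finset.mem_range.mp hi
              have h1 : n+1-i = (n-i)+1 := by omega
              rw [h1, poch_succ_left (c-a-b) (n-i)]
              have e4 : c-a-b+1 = (c+1)-a-b := by ring
              rw [e4]
              ring
            rw [Finset.sum_congr rfl conv3, ← Finset.mul_sum, ← ih0 a b (c+1)]
            ring
        rw [s1]
        -- final ring identity
        have expand1 : poch (c-a) (n+2) = (c-a) * ((c-a+1) + (n:ℝ)) * poch ((c-a)+1) n := by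
          rw [poch_succ_left (c-a) (n+1), poch_succ ((c-a)+1) n]
          ring
        have expand2 : poch (c-b) (n+2) = (c-b) * ((c-b+1) + (n:ℝ)) * poch ((c-b)+1) n := by
          rw [poch_succ_left (c-b) (n+1), poch_succ ((c-b)+1) n]
          ring
        have expand3 : poch (c-a) (n+1) = (c-a) * poch ((c-a)+1) n := poch_succ_left _ n
        have expand4 : poch (c-b) (n+1) = (c-b) * poch ((c-b)+1) n := poch_succ_left _ n
        have e5 : c+1-a = (c-a)+1 := by ring
        have e6 : c+1-b = (c-b)+1 := by ring
        rw [expand1, expand2, expand3, expand4, e5, e6]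
        ring

lemma T3 (N : ℕ) (A B C D : ℝ) :
    ∑ k ∈ range (N+1), (-1:ℝ)^k * (N.choose k : ℝ) * poch A k * poch B k *
        poch (C+k) (N-k) * poch (D+k) (N-k)
      = ∑ k ∈ range (N+1), (N.choose k : ℝ) * poch B k * poch (C-A) k *
        poch (C+k) (N-k) * poch (D-B) (N-k) := by
  symm
  -- expand poch (D-B) (N-k) via AV
  have expand : ∀ k ∈ range (N+1), (N.choose k : ℝ) * poch B k * poch (C-A) k *
        poch (C+k) (N-k) * poch (D-B) (N-k)
      = ∑ j ∈ range (N+1-k), ((N.choose k : ℝ) * poch B k * poch (C-A) k *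
          poch (C+k) (N-k)) * ((-1:ℝ)^j * ((N-k).choose j : ℝ) * poch (B+k) j *
          poch ((D+k)+j) (N-k-j)) := by
    intro k hk
    have hk' : k ≤ N := by simpa [Nat.lt_succ_iff] using Finset.mem_range.mp hk
    have hav := AV (N-k) (B+(k:ℝ)) (D+(k:ℝ))
    have e1 : (D+(k:ℝ)) - (B+(k:ℝ)) = D - B := by ring
    rw [e1] at hav
    have e2 : N-k+1 = N+1-k := by omega
    rw [e2] at hav
    rw [← hav, Finset.mul_sum]
  rw [Finset.sum_congr rfl expand]
  rw [tri N (fun k j => ((N.choose k : ℝ) * poch B k * poch (C-A) k *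
          poch (C+(k:ℝ)) (N-k)) * ((-1:ℝ)^j * ((N-k).choose j : ℝ) * poch (B+(k:ℝ)) j *
          poch ((D+(k:ℝ))+(j:ℝ)) (N-k-j)))]
  -- now per s, evaluate inner sum via AV
  have inner : ∀ s ∈ range (N+1),
      ∑ k ∈ range (s+1), ((N.choose k : ℝ) * poch B k * poch (C-A) k *
          poch (C+(k:ℝ)) (N-k)) * ((-1:ℝ)^(s-k) * ((N-k).choose (s-k) : ℝ) *
          poch (B+(k:ℝ)) (s-k) * poch ((D+(k:ℝ))+((s-k:ℕ):ℝ)) (N-k-(s-k)))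
      = (-1:ℝ)^s * (N.choose s : ℝ) * poch A s * poch B s * poch (C+s) (N-s) *
          poch (D+s) (N-s) := by
    intro s hs
    have hs' : s ≤ N := by simpa [Nat.lt_succ_iff] using Finset.mem_range.mp hs
    have conv : ∀ k ∈ range (s+1), ((N.choose k : ℝ) * poch B k * poch (C-A) k *
          poch (C+(k:ℝ)) (N-k)) * ((-1:ℝ)^(s-k) * ((N-k).choose (s-k) : ℝ) *
          poch (B+(k:ℝ)) (s-k) * poch ((D+(k:ℝ))+((s-k:ℕ):ℝ)) (N-k-(s-k)))
        = ((-1:ℝ)^s * (N.choose s : ℝ) * poch B s * poch (C+(s:ℝ)) (N-s) * poch (D+(s:ℝ)) (N-s)) *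
          ((-1:ℝ)^k * (s.choose k : ℝ) * poch (C-A) k * poch (C+(k:ℝ)) (s-k)) := by
      intro k hkk
      have hk' : k ≤ s := by simpa [Nat.lt_succ_iff] using Finset.mem_range.mp hkk
      -- signs
      have hsign : (-1:ℝ)^(s-k) * (-1:ℝ)^k = (-1:ℝ)^s := by
        rw [← pow_add]
        congr 1
        omega
      -- choose product
      have hch : ((N.choose k : ℕ) : ℝ) * (((N-k).choose (s-k) : ℕ) : ℝ)
          = ((N.choose s : ℕ) : ℝ) * ((s.choose k : ℕ) : ℝ) := by
        have h0 := choose_mul_choose N k (s-k) (by omega)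
        have e : k + (s-k) = s := by omega
        rw [e] at h0
        exact_mod_cast congrArg (Nat.cast : ℕ → ℝ) h0
      -- poch B merge
      have hB : poch B k * poch (B+(k:ℝ)) (s-k) = poch B s := by
        have := poch_add B k (s-k)
        have e : k + (s-k) = s := by omega
        rw [e] at this
        linarith
      -- poch C split
      have hC : poch (C+(k:ℝ)) (N-k) = poch (C+(k:ℝ)) (s-k) * poch (C+(s:ℝ)) (N-s) := by
        have h1 := poch_add (C+(k:ℝ)) (s-k) (N-s)
        have e : (s-k) + (N-s) = N-k := by omega
        rw [e] at h1
        have e2 : C+(k:ℝ)+((s-k:ℕ):ℝ) = C+(s:ℝ) := by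
          push_cast [Nat.cast_sub hk']
          ring
        rw [e2] at h1
        exact h1
      -- poch D arg
      have hD : (D+(k:ℝ))+((s-k:ℕ):ℝ) = D+(s:ℝ) := by
        push_cast [Nat.cast_sub hk']
        ring
      have hDlen : N-k-(s-k) = N-s := by omega
      rw [hD, hDlen, hC, ← hB, ← hsign]
      have h2 : (-1:ℝ)^k * (-1:ℝ)^k = 1 := by
        rw [← pow_add]
        exact Even.neg_one_pow ⟨k, rfl⟩
      linear_combination ((-1:ℝ)^(s-k) * poch B k * poch (B+(k:ℝ)) (s-k) *
          poch (C-A) k * poch (C+(k:ℝ)) (s-k) * poch (C+(s:ℝ)) (N-s) * poch (D+(s:ℝ)) (N-s)) * hch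
        - ((-1:ℝ)^(s-k) * ((N.choose s : ℕ):ℝ) * ((s.choose k : ℕ):ℝ) * poch B k *
          poch (B+(k:ℝ)) (s-k) * poch (C-A) k * poch (C+(k:ℝ)) (s-k) * poch (C+(s:ℝ)) (N-s) *
          poch (D+(s:ℝ)) (N-s)) * h2
    rw [Finset.sum_congr rfl conv, ← Finset.mul_sum]
    have hav2 := AV s (C-A) C
    have e3 : C - (C-A) = A := by ring
    rw [e3] at hav2
    have conv2 : ∑ k ∈ range (s+1), (-1:ℝ)^k * (s.choose k : ℝ) * poch (C-A) k *
          poch (C+(k:ℝ)) (s-k) = poch A s := hav2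
    rw [conv2]
    ring
  rw [Finset.sum_congr rfl inner]

lemma tri2 (M : ℕ) (f : ℕ → ℕ → ℝ) :
    ∑ k ∈ range (M+1), ∑ j ∈ range (M+1-k), f k j
      = ∑ j ∈ range (M+1), ∑ k ∈ range (M+1-j), f k j := by
  rw [Finset.sum_sigma', Finset.sum_sigma']
  refine Finset.sum_nbij' (fun p => ⟨p.2, p.1⟩) (fun p => ⟨p.2, p.1⟩) ?_ ?_ ?_ ?_ ?_ <;>
    simp only [Finset.mem_sigma, Finset.mem_range, Sigma.forall] <;> intro a b h
  · omega
  · omega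
  · trivial
  · trivial
  · trivial

lemma choose_mul_choose' (m k j : ℕ) (h : k + j ≤ m) :
    (m.choose k) * ((m-k).choose j) = (m.choose j) * ((m-j).choose k) := by
  rw [choose_mul_choose m k j h]
  have h2 := choose_mul_choose m j k (by omega)
  rw [Nat.add_comm j k] at h2
  rw [h2]
  have hsym : (k+j).choose j = (k+j).choose k := by
    have := Nat.choose_symm (Nat.le_add_right k j : k ≤ k+j)
    rwa [Nat.add_sub_cancel_left] at this
  rw [← hsym]

lemma WH (m : ℕ) (x y z u v : ℝ) :
    ∑ k ∈ range (m+1), (-1:ℝ)^k * (m.choose k : ℝ) * poch x k * poch y k * poch z k *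
        poch (u+k) (m-k) * poch (v+k) (m-k) * poch ((x+y+z+1-m-u-v)+k) (m-k)
      = ∑ k ∈ range (m+1), (-1:ℝ)^k * (m.choose k : ℝ) * poch (u-x) k * poch (u-y) k *
        poch z k * poch (u+k) (m-k) * poch (v-z) (m-k) * poch ((x+y+z+1-m-u-v)-z) (m-k) := by
  set w : ℝ := x+y+z+1-m-u-v with hw
  -- Step 1: expand (v+k)_{m-k} (w+k)_{m-k} by PS
  have expand : ∀ k ∈ range (m+1), (-1:ℝ)^k * (m.choose k : ℝ) * poch x k * poch y k * poch z k *
        poch (u+k) (m-k) * poch (v+k) (m-k) * poch (w+k) (m-k)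
      = ∑ j ∈ range (m+1-k), ((-1:ℝ)^k * (m.choose k : ℝ) * poch x k * poch y k * poch z k *
          poch (u+k) (m-k)) * (((m-k).choose j : ℝ) * poch (w-z) j * poch (v-z) j *
          poch ((v+w-z+k)+j) (m-k-j) * poch (z+k) (m-k-j)) := by
    intro k hk
    have hk' : k ≤ m := by simpa [Nat.lt_succ_iff] using Finset.mem_range.mp hk
    have hps := PS (m-k) (w-z) (v-z) (v+w-z+(k:ℝ))
    have e1 : v+w-z+(k:ℝ) - (w-z) = v + k := by ring
    have e2 : v+w-z+(k:ℝ) - (v-z) = w + k := by ring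
    have e3 : v+w-z+(k:ℝ) - (w-z) - (v-z) = z + k := by ring
    rw [e3, e1, e2] at hps
    have e4 : m-k+1 = m+1-k := by omega
    rw [e4] at hps
    have regroup : (-1:ℝ)^k * (m.choose k : ℝ) * poch x k * poch y k * poch z k *
        poch (u+(k:ℝ)) (m-k) * poch (v+(k:ℝ)) (m-k) * poch (w+(k:ℝ)) (m-k)
      = ((-1:ℝ)^k * (m.choose k : ℝ) * poch x k * poch y k * poch z k *
          poch (u+(k:ℝ)) (m-k)) * (poch (v+(k:ℝ)) (m-k) * poch (w+(k:ℝ)) (m-k)) := by ring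
    rw [regroup, ← hps, Finset.mul_sum]
  rw [Finset.sum_congr rfl expand]
  rw [tri2 m (fun k j => ((-1:ℝ)^k * (m.choose k : ℝ) * poch x k * poch y k * poch z k *
          poch (u+(k:ℝ)) (m-k)) * (((m-k).choose j : ℝ) * poch (w-z) j * poch (v-z) j *
          poch ((v+w-z+(k:ℝ))+(j:ℝ)) (m-k-j) * poch (z+(k:ℝ)) (m-k-j)))]
  -- Step 2: inner k-sum via PS
  have inner : ∀ j ∈ range (m+1),
      ∑ k ∈ range (m+1-j), ((-1:ℝ)^k * (m.choose k : ℝ) * poch x k * poch y k * poch z k *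
          poch (u+(k:ℝ)) (m-k)) * (((m-k).choose j : ℝ) * poch (w-z) j * poch (v-z) j *
          poch ((v+w-z+(k:ℝ))+(j:ℝ)) (m-k-j) * poch (z+(k:ℝ)) (m-k-j))
      = ((-1:ℝ)^(m-j) * (m.choose j : ℝ) * poch (w-z) j * poch (v-z) j * poch z (m-j) *
          poch (u+((m-j:ℕ):ℝ)) j) * (poch (u-x) (m-j) * poch (u-y) (m-j)) := by
    intro j hj
    have hj' : j ≤ m := by simpa [Nat.lt_succ_iff] using Finset.mem_range.mp hj
    have conv : ∀ k ∈ range (m+1-j), ((-1:ℝ)^k * (m.choose k : ℝ) * poch x k * poch y k * poch z k *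
          poch (u+(k:ℝ)) (m-k)) * (((m-k).choose j : ℝ) * poch (w-z) j * poch (v-z) j *
          poch ((v+w-z+(k:ℝ))+(j:ℝ)) (m-k-j) * poch (z+(k:ℝ)) (m-k-j))
        = ((-1:ℝ)^(m-j) * (m.choose j : ℝ) * poch (w-z) j * poch (v-z) j * poch z (m-j) *
            poch (u+((m-j:ℕ):ℝ)) j) *
          (((m-j).choose k : ℝ) * poch x k * poch y k * poch (u+(k:ℝ)) (m-j-k) *
            poch (u-x-y) (m-j-k)) := by
      intro k hkk
      have hk2 : k ≤ m-j := by
        have := Finset.mem_range.mp hkk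
        omega
      have hkj : k + j ≤ m := by omega
      -- choose
      have hch : ((m.choose k : ℕ) : ℝ) * (((m-k).choose j : ℕ) : ℝ)
          = ((m.choose j : ℕ) : ℝ) * (((m-j).choose k : ℕ) : ℝ) := by
        exact_mod_cast congrArg (Nat.cast : ℕ → ℝ) (choose_mul_choose' m k j hkj)
      -- z merge : (z)_k (z+k)_{m-k-j} = (z)_{m-j}
      have hz : poch z k * poch (z+(k:ℝ)) (m-k-j) = poch z (m-j) := by
        have h1 := poch_add z k (m-j-k)
        have e : k + (m-j-k) = m-j := by omega
        have e2 : m-k-j = m-j-k := by omega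
        rw [e] at h1
        rw [e2]
        linarith
      -- u split
      have hu : poch (u+(k:ℝ)) (m-k) = poch (u+(k:ℝ)) (m-j-k) * poch (u+((m-j:ℕ):ℝ)) j := by
        have h1 := poch_add (u+(k:ℝ)) (m-j-k) j
        have e : (m-j-k) + j = m-k := by omega
        rw [e] at h1
        have e2 : u+(k:ℝ)+((m-j-k:ℕ):ℝ) = u+((m-j:ℕ):ℝ) := by
          push_cast [Nat.cast_sub hk2, Nat.cast_sub hj', Nat.cast_sub (by omega : j + k ≤ m)]
          ring
        rw [e2] at h1
        exact h1
      -- reversal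
      have hrev : poch ((v+w-z+(k:ℝ))+(j:ℝ)) (m-k-j)
          = (-1:ℝ)^(m-j-k) * poch (u-x-y) (m-j-k) := by
        have h1 := poch_reverse ((v+w-z+(k:ℝ))+(j:ℝ)) (m-k-j)
        have e2 : m-k-j = m-j-k := by omega
        rw [e2] at h1 ⊢
        have e3 : 1 - ((v+w-z+(k:ℝ))+(j:ℝ)) - ((m-j-k:ℕ):ℝ) = u-x-y := by
          rw [hw]
          push_cast [Nat.cast_sub hk2, Nat.cast_sub hj']
          ring
        rw [e3] at h1
        exact h1
      -- sign
      have hsign : (-1:ℝ)^(m-j-k) * (-1:ℝ)^k = (-1:ℝ)^(m-j) := by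
        rw [← pow_add]
        congr 1
        omega
      rw [show m-k-j = m-j-k from by omega] at hrev hz ⊢
      rw [hrev, hu]
      linear_combination ((-1:ℝ)^(m-j-k) * (-1:ℝ)^k * ((m.choose k : ℕ):ℝ) * (((m-k).choose j : ℕ):ℝ) *
          poch x k * poch y k * poch (u+(k:ℝ)) (m-j-k) * poch (u+((m-j:ℕ):ℝ)) j *
          poch (w-z) j * poch (v-z) j * poch (u-x-y) (m-j-k)) * hz
        + ((-1:ℝ)^(m-j-k) * (-1:ℝ)^k * poch x k * poch y k * poch (u+(k:ℝ)) (m-j-k) *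
          poch (u+((m-j:ℕ):ℝ)) j * poch (w-z) j * poch (v-z) j * poch (u-x-y) (m-j-k) *
          poch z (m-j)) * hch
        + (((m.choose j : ℕ):ℝ) * (((m-j).choose k : ℕ):ℝ) * poch x k * poch y k *
          poch (u+(k:ℝ)) (m-j-k) * poch (u+((m-j:ℕ):ℝ)) j * poch (w-z) j * poch (v-z) j *
          poch (u-x-y) (m-j-k) * poch z (m-j)) * hsign
    rw [Finset.sum_congr rfl conv, ← Finset.mul_sum]
    congr 1
    have hps2 := PS (m-j) x y u
    have e : m-j+1 = m+1-j := by omega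
    rw [e] at hps2
    exact hps2
  rw [Finset.sum_congr rfl inner]
  -- Step 3: reflect
  have refl := Finset.sum_range_reflect (fun j => ((-1:ℝ)^(m-j) * (m.choose j : ℝ) * poch (w-z) j *
      poch (v-z) j * poch z (m-j) * poch (u+((m-j:ℕ):ℝ)) j) *
      (poch (u-x) (m-j) * poch (u-y) (m-j))) (m+1)
  rw [← refl]
  apply Finset.sum_congr rfl
  intro k hk
  have hk' : k ≤ m := by simpa [Nat.lt_succ_iff] using Finset.mem_range.mp hk
  simp only [Nat.add_sub_cancel]
  rw [show m - (m-k) = k from by omega, show (m.choose (m-k)) = m.choose k from Nat.choose_symm hk']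
  ring

lemma MAIN (m n : ℕ) (κ δ ε q0 q1 q2 q3 A2 A3 B0 lam : ℝ)
    (hε : ε = q3 + m)
    (hB0 : B0 = 1 - (q0 - κ))
    (hA2 : A2 = 1 - (q0 - κ) - n)
    (hA3 : A3 = 1 - (q3 - κ) - m)
    (hlam : lam = q1 - B0)
    (hq2 : q2 = 1 - (A2 - κ) - m)
    (hbal : A2 = q1 - δ + B0 + κ + 1 - (m:ℝ) - q1 - A3) :
    poch A2 m * (∑ i ∈ range (m+1), ∑ j ∈ range (n+1),
        (-1:ℝ)^(i+j) * (m.choose i : ℝ) * (n.choose j : ℝ) * poch δ i * poch ε j *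
          poch κ (i+j) * poch (q1+i) (m-i) * poch (q0+j) (n-j) * poch (q3+i+j) (m+n-i-j))
      = (-1:ℝ)^m * poch ε n * poch (q0-κ) n *
        (∑ i ∈ range (m+1), (-1:ℝ)^i * (m.choose i : ℝ) * poch δ i * poch lam i * poch κ i *
          poch (q1+i) (m-i) * poch (q2+i) (m-i) * poch (q3+i) (m-i)) := by
  -- STEP A+B: decompose and apply T3 to the i-sum for each fixed j
  have stepA : ∀ j ∈ range (n+1), ∀ i ∈ range (m+1),
      (-1:ℝ)^(i+j) * (m.choose i : ℝ) * (n.choose j : ℝ) * poch δ i * poch ε j *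
          poch κ (i+j) * poch (q1+(i:ℝ)) (m-i) * poch (q0+(j:ℝ)) (n-j) *
          poch (q3+(i:ℝ)+(j:ℝ)) (m+n-i-j)
      = ((-1:ℝ)^j * (n.choose j : ℝ) * poch ε j * poch κ j * poch (q0+(j:ℝ)) (n-j) *
          poch (ε+(j:ℝ)) (n-j)) *
        ((-1:ℝ)^i * (m.choose i : ℝ) * poch δ i * poch (κ+(j:ℝ)) i *
          poch (q1+(i:ℝ)) (m-i) * ((poch ((q3+(j:ℝ))+(i:ℝ)) (m-i)))) := by
    intro j hj i hi
    have hi' : i ≤ m := by simpa [Nat.lt_succ_iff] using Finset.mem_range.mp hi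
    have hj' : j ≤ n := by simpa [Nat.lt_succ_iff] using Finset.mem_range.mp hj
    have hκsplit : poch κ (i+j) = poch κ j * poch (κ+(j:ℝ)) i := by
      rw [Nat.add_comm i j, poch_add]
    have hq3split : poch (q3+(i:ℝ)+(j:ℝ)) (m+n-i-j)
        = poch ((q3+(j:ℝ))+(i:ℝ)) (m-i) * poch (ε+(j:ℝ)) (n-j) := by
      have h1 := poch_add (q3+(i:ℝ)+(j:ℝ)) (m-i) (n-j)
      have e1 : (m-i) + (n-j) = m+n-i-j := by omega
      rw [e1] at h1
      have e2 : q3+(i:ℝ)+(j:ℝ)+((m-i:ℕ):ℝ) = ε+(j:ℝ) := by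
        rw [hε]
        push_cast [Nat.cast_sub hi']
        ring
      rw [e2] at h1
      rw [show q3+(i:ℝ)+(j:ℝ) = (q3+(j:ℝ))+(i:ℝ) from by ring] at h1 ⊢
      exact h1
    rw [hκsplit, hq3split]
    have hsn : (-1:ℝ)^(i+j) = (-1:ℝ)^i * (-1:ℝ)^j := pow_add (-1:ℝ) i j
    rw [hsn]
    ring
  have sumA : ∑ i ∈ range (m+1), ∑ j ∈ range (n+1),
        (-1:ℝ)^(i+j) * (m.choose i : ℝ) * (n.choose j : ℝ) * poch δ i * poch ε j *
          poch κ (i+j) * poch (q1+(i:ℝ)) (m-i) * poch (q0+(j:ℝ)) (n-j) *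
          poch (q3+(i:ℝ)+(j:ℝ)) (m+n-i-j)
      = ∑ j ∈ range (n+1), ((-1:ℝ)^j * (n.choose j : ℝ) * poch ε j * poch κ j *
          poch (q0+(j:ℝ)) (n-j) * poch (ε+(j:ℝ)) (n-j)) *
          ∑ l ∈ range (m+1), (m.choose l : ℝ) * poch (κ+(j:ℝ)) l * poch (q1-δ) l *
            poch (q1+(l:ℝ)) (m-l) * poch (q3-κ) (m-l) := by
    rw [Finset.sum_comm]
    apply Finset.sum_congr rfl
    intro j hj
    rw [Finset.sum_congr rfl (stepA j hj), ← Finset.mul_sum]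
    congr 1
    have ht3 := T3 m δ (κ+(j:ℝ)) q1 (q3+(j:ℝ))
    have e4 : q3+(j:ℝ) - (κ+(j:ℝ)) = q3 - κ := by ring
    rw [e4] at ht3
    rw [ht3]
  rw [sumA]
  -- STEP C+D: swap, evaluate j-sum by AV
  have sumC : ∑ j ∈ range (n+1), ((-1:ℝ)^j * (n.choose j : ℝ) * poch ε j * poch κ j *
          poch (q0+(j:ℝ)) (n-j) * poch (ε+(j:ℝ)) (n-j)) *
          ∑ l ∈ range (m+1), (m.choose l : ℝ) * poch (κ+(j:ℝ)) l * poch (q1-δ) l *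
            poch (q1+(l:ℝ)) (m-l) * poch (q3-κ) (m-l)
      = poch ε n * ∑ l ∈ range (m+1), (m.choose l : ℝ) * poch (q1-δ) l * poch κ l *
          poch (q1+(l:ℝ)) (m-l) * poch (q3-κ) (m-l) * poch (q0-κ-(l:ℝ)) n := by
    have swap : ∑ j ∈ range (n+1), ((-1:ℝ)^j * (n.choose j : ℝ) * poch ε j * poch κ j *
          poch (q0+(j:ℝ)) (n-j) * poch (ε+(j:ℝ)) (n-j)) *
          ∑ l ∈ range (m+1), (m.choose l : ℝ) * poch (κ+(j:ℝ)) l * poch (q1-δ) l *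
            poch (q1+(l:ℝ)) (m-l) * poch (q3-κ) (m-l)
        = ∑ l ∈ range (m+1), ∑ j ∈ range (n+1),
            ((-1:ℝ)^j * (n.choose j : ℝ) * poch ε j * poch κ j *
              poch (q0+(j:ℝ)) (n-j) * poch (ε+(j:ℝ)) (n-j)) *
            ((m.choose l : ℝ) * poch (κ+(j:ℝ)) l * poch (q1-δ) l *
              poch (q1+(l:ℝ)) (m-l) * poch (q3-κ) (m-l)) := by
      rw [Finset.sum_comm]
      exact Finset.sum_congr rfl (fun j _ => by rw [Finset.mul_sum])
    rw [swap, Finset.mul_sum]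
    apply Finset.sum_congr rfl
    intro l hl
    have conv : ∀ j ∈ range (n+1),
        ((-1:ℝ)^j * (n.choose j : ℝ) * poch ε j * poch κ j *
          poch (q0+(j:ℝ)) (n-j) * poch (ε+(j:ℝ)) (n-j)) *
        ((m.choose l : ℝ) * poch (κ+(j:ℝ)) l * poch (q1-δ) l *
          poch (q1+(l:ℝ)) (m-l) * poch (q3-κ) (m-l))
        = (poch ε n * ((m.choose l : ℝ) * poch (q1-δ) l * poch κ l *
            poch (q1+(l:ℝ)) (m-l) * poch (q3-κ) (m-l))) *
          ((-1:ℝ)^j * (n.choose j : ℝ) * poch (κ+(l:ℝ)) j * poch ((q0)+(j:ℝ)) (n-j)) := by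
      intro j hj
      have hj' : j ≤ n := by simpa [Nat.lt_succ_iff] using Finset.mem_range.mp hj
      have hεmerge : poch ε j * poch (ε+(j:ℝ)) (n-j) = poch ε n := by
        have h1 := poch_add ε j (n-j)
        have e : j + (n-j) = n := by omega
        rw [e] at h1
        linarith
      have hκκ : poch κ j * poch (κ+(j:ℝ)) l = poch κ l * poch (κ+(l:ℝ)) j := by
        have h1 := poch_add κ j l
        have h2 := poch_add κ l j
        rw [Nat.add_comm l j] at h2
        linarith
      calc ((-1:ℝ)^j * (n.choose j : ℝ) * poch ε j * poch κ j *
          poch (q0+(j:ℝ)) (n-j) * poch (ε+(j:ℝ)) (n-j)) *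
        ((m.choose l : ℝ) * poch (κ+(j:ℝ)) l * poch (q1-δ) l *
          poch (q1+(l:ℝ)) (m-l) * poch (q3-κ) (m-l))
          = (poch ε j * poch (ε+(j:ℝ)) (n-j)) * (poch κ j * poch (κ+(j:ℝ)) l) *
            ((-1:ℝ)^j * (n.choose j : ℝ) * poch (q0+(j:ℝ)) (n-j) * ((m.choose l : ℝ) *
              poch (q1-δ) l * poch (q1+(l:ℝ)) (m-l) * poch (q3-κ) (m-l))) := by ring
        _ = (poch ε n) * (poch κ l * poch (κ+(l:ℝ)) j) *
            ((-1:ℝ)^j * (n.choose j : ℝ) * poch (q0+(j:ℝ)) (n-j) * ((m.choose l : ℝ) *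
              poch (q1-δ) l * poch (q1+(l:ℝ)) (m-l) * poch (q3-κ) (m-l))) := by
              rw [hεmerge, hκκ]
        _ = (poch ε n * ((m.choose l : ℝ) * poch (q1-δ) l * poch κ l *
            poch (q1+(l:ℝ)) (m-l) * poch (q3-κ) (m-l))) *
          ((-1:ℝ)^j * (n.choose j : ℝ) * poch (κ+(l:ℝ)) j * poch ((q0)+(j:ℝ)) (n-j)) := by ring
    rw [Finset.sum_congr rfl conv, ← Finset.mul_sum]
    have hav : ∑ j ∈ range (n+1), (-1:ℝ)^j * (n.choose j : ℝ) * poch (κ+(l:ℝ)) j *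
        poch (q0+(j:ℝ)) (n-j) = poch (q0-κ-(l:ℝ)) n := by
      have h1 := AV n (κ+(l:ℝ)) q0
      have e : q0 - (κ+(l:ℝ)) = q0-κ-(l:ℝ) := by ring
      rw [e] at h1
      exact h1
    rw [hav]
    ring
  rw [sumC]
  -- STEP E: multiply by poch A2 m, convert
  rw [Finset.mul_sum, Finset.mul_sum]
  have stepE : ∀ l ∈ range (m+1),
      poch A2 m * (poch ε n * ((m.choose l : ℝ) * poch (q1-δ) l * poch κ l *
          poch (q1+(l:ℝ)) (m-l) * poch (q3-κ) (m-l) * poch (q0-κ-(l:ℝ)) n))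
      = ((-1:ℝ)^m * poch ε n * poch (q0-κ) n) *
        ((-1:ℝ)^l * (m.choose l : ℝ) * poch (q1-δ) l * poch B0 l * poch κ l *
          poch (q1+(l:ℝ)) (m-l) * poch (A3+(l:ℝ)) (m-l) * poch (A2+(l:ℝ)) (m-l)) := by
    intro l hl
    have hl' : l ≤ m := by simpa [Nat.lt_succ_iff] using Finset.mem_range.mp hl
    have hA2split : poch A2 m = poch A2 l * poch (A2+(l:ℝ)) (m-l) := by
      have h1 := poch_add A2 l (m-l)
      have e : l + (m-l) = m := by omega
      rw [e] at h1
      exact h1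
    have hshift : poch (q0-κ-(l:ℝ)) n * poch A2 l = poch (q0-κ) n * poch B0 l := by
      have h1 := poch_shift (q0-κ) l n
      rw [← hA2, ← hB0] at h1
      exact h1
    have hrev : poch (q3-κ) (m-l) = (-1:ℝ)^(m-l) * poch (A3+(l:ℝ)) (m-l) := by
      have h1 := poch_reverse (q3-κ) (m-l)
      have e : 1 - (q3-κ) - ((m-l:ℕ):ℝ) = A3+(l:ℝ) := by
        rw [hA3]
        push_cast [Nat.cast_sub hl']
        ring
      rw [e] at h1
      exact h1
    have hsign : (-1:ℝ)^(m-l) * (-1:ℝ)^l = (-1:ℝ)^m := by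
      rw [← pow_add]
      congr 1
      omega
    rw [hA2split, hrev, ← hsign]
    have h2 : (-1:ℝ)^l * (-1:ℝ)^l = 1 := by
      rw [← pow_add]
      exact Even.neg_one_pow ⟨l, rfl⟩
    linear_combination ((-1:ℝ)^(m-l) * poch ε n * ((m.choose l : ℕ):ℝ) *
        poch (q1-δ) l * poch κ l * poch (q1+(l:ℝ)) (m-l) * poch (A3+(l:ℝ)) (m-l) *
        poch (A2+(l:ℝ)) (m-l)) * hshift
      - ((-1:ℝ)^(m-l) * poch ε n * ((m.choose l : ℕ):ℝ) * poch (q1-δ) l * poch κ l *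
        poch (q1+(l:ℝ)) (m-l) * poch (A3+(l:ℝ)) (m-l) * poch (A2+(l:ℝ)) (m-l) *
        poch (q0-κ) n * poch B0 l) * h2
  rw [Finset.sum_congr rfl stepE, ← Finset.mul_sum]
  -- STEP F: Whipple
  congr 1
  have hwh := WH m (q1-δ) B0 κ q1 A3
  rw [← hbal] at hwh
  rw [show q1 - (q1-δ) = δ from by ring, show A2 - κ = A2 - κ from rfl] at hwh
  rw [← hlam] at hwh
  calc ∑ l ∈ range (m+1), (-1:ℝ)^l * (m.choose l : ℝ) * poch (q1-δ) l * poch B0 l * poch κ l *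
          poch (q1+(l:ℝ)) (m-l) * poch (A3+(l:ℝ)) (m-l) * poch (A2+(l:ℝ)) (m-l)
      = ∑ k ∈ range (m+1), (-1:ℝ)^k * (m.choose k : ℝ) * poch δ k * poch lam k *
          poch κ k * poch (q1+(k:ℝ)) (m-k) * poch (A3-κ) (m-k) * poch (A2-κ) (m-k) := hwh
    _ = ∑ i ∈ range (m+1), (-1:ℝ)^i * (m.choose i : ℝ) * poch δ i * poch lam i * poch κ i *
          poch (q1+(i:ℝ)) (m-i) * poch (q2+(i:ℝ)) (m-i) * poch (q3+(i:ℝ)) (m-i) := by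
        apply Finset.sum_congr rfl
        intro i hi
        have hi' : i ≤ m := by simpa [Nat.lt_succ_iff] using Finset.mem_range.mp hi
        have hrev2 : poch (A3-κ) (m-i) = (-1:ℝ)^(m-i) * poch (q3+(i:ℝ)) (m-i) := by
          have h1 := poch_reverse (A3-κ) (m-i)
          have e : 1 - (A3-κ) - ((m-i:ℕ):ℝ) = q3+(i:ℝ) := by
            rw [hA3]
            push_cast [Nat.cast_sub hi']
            ring
          rw [e] at h1
          exact h1
        have hrev3 : poch (A2-κ) (m-i) = (-1:ℝ)^(m-i) * poch (q2+(i:ℝ)) (m-i) := by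
          have h1 := poch_reverse (A2-κ) (m-i)
          have e : 1 - (A2-κ) - ((m-i:ℕ):ℝ) = q2+(i:ℝ) := by
            rw [hq2]
            push_cast [Nat.cast_sub hi']
            ring
          rw [e] at h1
          exact h1
        rw [hrev2, hrev3]
        have h2 : (-1:ℝ)^(m-i) * (-1:ℝ)^(m-i) = 1 := by
          rw [← pow_add]
          exact Even.neg_one_pow ⟨m-i, rfl⟩
        linear_combination ((-1:ℝ)^i * ((m.choose i : ℕ):ℝ) * poch δ i * poch lam i *
          poch κ i * poch (q1+(i:ℝ)) (m-i) * poch (q2+(i:ℝ)) (m-i) * poch (q3+(i:ℝ)) (m-i)) * h2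

lemma pair_poch (c r : ℕ) (hr : r ≤ 1) (i : ℕ) :
    poch (-(((2*c+r : ℕ)):ℝ)/2) i * poch ((1 - ((2*c+r:ℕ):ℝ))/2) i
      = poch (-(c:ℝ)) i * poch (1/2 - (c:ℝ) - (r:ℝ)) i := by
  interval_cases r
  · rw [show (-(((2*c+0 : ℕ)):ℝ)/2) = -(c:ℝ) from by push_cast; ring,
      show ((1 - ((2*c+0:ℕ):ℝ))/2) = 1/2 - (c:ℝ) - ((0:ℕ):ℝ) from by push_cast; ring]
  · rw [show (-(((2*c+1 : ℕ)):ℝ)/2) = 1/2 - (c:ℝ) - ((1:ℕ):ℝ) from by push_cast; ring,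
      show ((1 - ((2*c+1:ℕ):ℝ))/2) = -(c:ℝ) from by push_cast; ring]
    ring

/-- Reduction of the double sum for the moments s(α) to a single balanced
    terminating ₄F₃ sum. -/
theorem stmt14 (α₁ α₂ α₃ α₄ : ℕ) (κ : ℝ)
    (hp1 : α₁ % 2 = α₄ % 2) (hp2 : α₂ % 2 = α₄ % 2) (hp3 : α₃ % 2 = α₄ % 2)
    (hκ : poch (κ + 1/2) ((α₂ + α₄) / 2) ≠ 0) :
    (∑ i ∈ Finset.range (α₄ / 2 + 1), ∑ j ∈ Finset.range (α₃ / 2 + 1),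
      poch (-(α₄ : ℝ)) (2 * i) * poch (-(α₃ : ℝ)) (2 * j) * poch κ (i + j) /
        ((Nat.factorial i : ℝ) * (Nat.factorial j : ℝ) *
          poch (1/2 - (((α₁ + α₄) / 2 : ℕ) : ℝ)) i *
          poch (1/2 - (((α₂ + α₃) / 2 : ℕ) : ℝ)) j *
          poch (1/2 - (((α₃ + α₄) / 2 : ℕ) : ℝ)) (i + j) * (2 : ℝ) ^ (2 * i + 2 * j)))
    = (poch (κ + 1/2) ((α₂ + α₃) / 2) * poch (1/2) ((α₂ + α₄) / 2) /
        (poch (1/2) ((α₂ + α₃) / 2) * poch (κ + 1/2) ((α₂ + α₄) / 2))) *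
      ∑ i ∈ Finset.range (α₄ / 2 + 1),
        poch (-(α₄ : ℝ) / 2) i * poch ((1 - (α₄ : ℝ)) / 2) i * poch κ i *
            poch (-κ - (((α₁ + α₄) / 2 : ℕ) : ℝ) - (((α₂ + α₃) / 2 : ℕ) : ℝ)) i /
          ((Nat.factorial i : ℝ) * poch (1/2 - (((α₁ + α₄) / 2 : ℕ) : ℝ)) i *
            poch (1/2 - (((α₂ + α₄) / 2 : ℕ) : ℝ)) i *
            poch (1/2 - (((α₃ + α₄) / 2 : ℕ) : ℝ)) i) := by
  have hr1 : α₄ % 2 ≤ 1 := by omega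
  set r := α₄ % 2 with hrdef
  set c1 := α₁ / 2 with hc1
  set c2 := α₂ / 2 with hc2
  set c3 := α₃ / 2 with hc3
  set c4 := α₄ / 2 with hc4
  have h1 : α₁ = 2*c1 + r := by omega
  have h2 : α₂ = 2*c2 + r := by omega
  have h3 : α₃ = 2*c3 + r := by omega
  have h4 : α₄ = 2*c4 + r := by omega
  have hb1 : (α₁ + α₄) / 2 = c1+c4+r := by omega
  have hb0 : (α₂ + α₃) / 2 = c2+c3+r := by omega
  have hb2 : (α₂ + α₄) / 2 = c2+c4+r := by omega
  have hb3 : (α₃ + α₄) / 2 = c3+c4+r := by omega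
  rw [hb2] at hκ
  rw [hb1, hb0, hb2, hb3]
  -- conversion of the quadratic pochhammers
  have hcast4 : (-(α₄:ℝ)) = -(((2*c4+r : ℕ)):ℝ) := by exact_mod_cast congrArg (fun t : ℕ => -(t:ℝ)) h4
  have hcast3 : (-(α₃:ℝ)) = -(((2*c3+r : ℕ)):ℝ) := by exact_mod_cast congrArg (fun t : ℕ => -(t:ℝ)) h3
  have conv4 : ∀ i : ℕ, poch (-(α₄:ℝ)) (2*i)
      = 4^i * (poch (-(c4:ℝ)) i * poch (1/2-(c4:ℝ)-(r:ℝ)) i) := by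
    intro i
    rw [hcast4, poch_double]
    rw [show ((-(((2*c4+r : ℕ)):ℝ))+1)/2 = (1 - ((2*c4+r:ℕ):ℝ))/2 from by ring]
    rw [show (4:ℝ)^i * poch (-(((2*c4+r : ℕ)):ℝ)/2) i * poch ((1 - ((2*c4+r:ℕ):ℝ))/2) i
        = 4^i * (poch (-(((2*c4+r : ℕ)):ℝ)/2) i * poch ((1 - ((2*c4+r:ℕ):ℝ))/2) i) from by ring]
    rw [pair_poch c4 r hr1 i]
  have conv3 : ∀ j : ℕ, poch (-(α₃:ℝ)) (2*j)
      = 4^j * (poch (-(c3:ℝ)) j * poch (1/2-(c3:ℝ)-(r:ℝ)) j) := by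
    intro j
    rw [hcast3, poch_double]
    rw [show ((-(((2*c3+r : ℕ)):ℝ))+1)/2 = (1 - ((2*c3+r:ℕ):ℝ))/2 from by ring]
    rw [show (4:ℝ)^j * poch (-(((2*c3+r : ℕ)):ℝ)/2) j * poch ((1 - ((2*c3+r:ℕ):ℝ))/2) j
        = 4^j * (poch (-(((2*c3+r : ℕ)):ℝ)/2) j * poch ((1 - ((2*c3+r:ℕ):ℝ))/2) j) from by ring]
    rw [pair_poch c3 r hr1 j]
  have conv4' : ∀ i : ℕ, poch (-(α₄:ℝ)/2) i * poch ((1-(α₄:ℝ))/2) i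
      = poch (-(c4:ℝ)) i * poch (1/2-(c4:ℝ)-(r:ℝ)) i := by
    intro i
    have e1 : -(α₄:ℝ)/2 = -(((2*c4+r : ℕ)):ℝ)/2 := by rw [hcast4]
    have e2 : (1-(α₄:ℝ))/2 = (1 - ((2*c4+r:ℕ):ℝ))/2 := by
      rw [show (α₄:ℝ) = ((2*c4+r:ℕ):ℝ) from by exact_mod_cast congrArg (Nat.cast : ℕ → ℝ) h4]
    rw [e1, e2, pair_poch c4 r hr1 i]
  -- nonvanishing
  have hne1 : ∀ k : ℕ, poch (1/2 - ((c1+c4+r:ℕ):ℝ)) k ≠ 0 := fun k => poch_half_ne_zero _ k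
  have hne0 : ∀ k : ℕ, poch (1/2 - ((c2+c3+r:ℕ):ℝ)) k ≠ 0 := fun k => poch_half_ne_zero _ k
  have hne2 : ∀ k : ℕ, poch (1/2 - ((c2+c4+r:ℕ):ℝ)) k ≠ 0 := fun k => poch_half_ne_zero _ k
  have hne3 : ∀ k : ℕ, poch (1/2 - ((c3+c4+r:ℕ):ℝ)) k ≠ 0 := fun k => poch_half_ne_zero _ k
  have hfac : ∀ k : ℕ, (Nat.factorial k : ℝ) ≠ 0 := fun k => by
    exact_mod_cast Nat.factorial_ne_zero k
  -- abbreviations (as plain reals)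
  -- LHS rewriting
  have hLHS : ∑ i ∈ Finset.range (c4 + 1), ∑ j ∈ Finset.range (c3 + 1),
      poch (-(α₄ : ℝ)) (2 * i) * poch (-(α₃ : ℝ)) (2 * j) * poch κ (i + j) /
        ((Nat.factorial i : ℝ) * (Nat.factorial j : ℝ) *
          poch (1/2 - ((c1+c4+r : ℕ) : ℝ)) i *
          poch (1/2 - ((c2+c3+r : ℕ) : ℝ)) j *
          poch (1/2 - ((c3+c4+r : ℕ) : ℝ)) (i + j) * (2 : ℝ) ^ (2 * i + 2 * j))
      = (∑ i ∈ range (c4+1), ∑ j ∈ range (c3+1),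
          (-1:ℝ)^(i+j) * (c4.choose i : ℝ) * (c3.choose j : ℝ) *
            poch (1/2-(c4:ℝ)-(r:ℝ)) i * poch (1/2-(c3:ℝ)-(r:ℝ)) j *
            poch κ (i+j) * poch ((1/2 - ((c1+c4+r:ℕ):ℝ))+i) (c4-i) *
            poch ((1/2 - ((c2+c3+r:ℕ):ℝ))+j) (c3-j) *
            poch ((1/2 - ((c3+c4+r:ℕ):ℝ))+i+j) (c4+c3-i-j)) /
        (poch (1/2 - ((c1+c4+r:ℕ):ℝ)) c4 * poch (1/2 - ((c2+c3+r:ℕ):ℝ)) c3 *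
          poch (1/2 - ((c3+c4+r:ℕ):ℝ)) (c4+c3)) := by
    rw [Finset.sum_div]
    apply Finset.sum_congr rfl
    intro i hi
    rw [Finset.sum_div]
    apply Finset.sum_congr rfl
    intro j hj
    have hi' : i ≤ c4 := by simpa [Nat.lt_succ_iff] using Finset.mem_range.mp hi
    have hj' : j ≤ c3 := by simpa [Nat.lt_succ_iff] using Finset.mem_range.mp hj
    have hden : (Nat.factorial i : ℝ) * (Nat.factorial j : ℝ) *
        poch (1/2 - ((c1+c4+r : ℕ) : ℝ)) i * poch (1/2 - ((c2+c3+r : ℕ) : ℝ)) j *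
        poch (1/2 - ((c3+c4+r : ℕ) : ℝ)) (i + j) * (2 : ℝ) ^ (2 * i + 2 * j) ≠ 0 := by
      apply mul_ne_zero
      apply mul_ne_zero
      apply mul_ne_zero
      apply mul_ne_zero
      apply mul_ne_zero
      · exact hfac i
      · exact hfac j
      · exact hne1 i
      · exact hne0 j
      · exact hne3 (i+j)
      · positivity
    have hC1 : poch (1/2 - ((c1+c4+r:ℕ):ℝ)) c4 * poch (1/2 - ((c2+c3+r:ℕ):ℝ)) c3 *
        poch (1/2 - ((c3+c4+r:ℕ):ℝ)) (c4+c3) ≠ 0 :=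
      mul_ne_zero (mul_ne_zero (hne1 c4) (hne0 c3)) (hne3 (c4+c3))
    rw [div_eq_div_iff hden hC1]
    -- numerator conversions
    rw [conv4 i, conv3 j]
    rw [poch_neg_nat c4 i hi', poch_neg_nat c3 j hj']
    -- splits of the denominators
    have split1 : poch (1/2 - ((c1+c4+r:ℕ):ℝ)) c4
        = poch (1/2 - ((c1+c4+r:ℕ):ℝ)) i * poch ((1/2 - ((c1+c4+r:ℕ):ℝ))+(i:ℝ)) (c4-i) := by
      have h0 := poch_add (1/2 - ((c1+c4+r:ℕ):ℝ)) i (c4-i)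
      rw [show i + (c4-i) = c4 from by omega] at h0
      exact h0
    have split0 : poch (1/2 - ((c2+c3+r:ℕ):ℝ)) c3
        = poch (1/2 - ((c2+c3+r:ℕ):ℝ)) j * poch ((1/2 - ((c2+c3+r:ℕ):ℝ))+(j:ℝ)) (c3-j) := by
      have h0 := poch_add (1/2 - ((c2+c3+r:ℕ):ℝ)) j (c3-j)
      rw [show j + (c3-j) = c3 from by omega] at h0
      exact h0
    have split3 : poch (1/2 - ((c3+c4+r:ℕ):ℝ)) (c4+c3)
        = poch (1/2 - ((c3+c4+r:ℕ):ℝ)) (i+j) *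
          poch ((1/2 - ((c3+c4+r:ℕ):ℝ))+(i:ℝ)+(j:ℝ)) (c4+c3-i-j) := by
      have h0 := poch_add (1/2 - ((c3+c4+r:ℕ):ℝ)) (i+j) (c4+c3-(i+j))
      rw [show (i+j) + (c4+c3-(i+j)) = c4+c3 from by omega] at h0
      rw [show c4+c3-(i+j) = c4+c3-i-j from by omega] at h0
      rw [show (1/2 - ((c3+c4+r:ℕ):ℝ))+((i+j:ℕ):ℝ) = (1/2 - ((c3+c4+r:ℕ):ℝ))+(i:ℝ)+(j:ℝ)
        from by push_cast; ring] at h0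
      exact h0
    rw [split1, split0, split3]
    have hpow : (2:ℝ)^(2*i+2*j) = 4^i * 4^j := by
      rw [pow_add, pow_mul, pow_mul]
      norm_num
    rw [hpow, pow_add (-1:ℝ) i j]
    ring
  rw [hLHS]
  -- RHS rewriting
  have hRHS : ∑ i ∈ Finset.range (c4 + 1),
      poch (-(α₄ : ℝ) / 2) i * poch ((1 - (α₄ : ℝ)) / 2) i * poch κ i *
          poch (-κ - ((c1+c4+r : ℕ) : ℝ) - ((c2+c3+r : ℕ) : ℝ)) i /
        ((Nat.factorial i : ℝ) * poch (1/2 - ((c1+c4+r : ℕ) : ℝ)) i *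
          poch (1/2 - ((c2+c4+r : ℕ) : ℝ)) i * poch (1/2 - ((c3+c4+r : ℕ) : ℝ)) i)
      = (∑ i ∈ range (c4+1), (-1:ℝ)^i * (c4.choose i : ℝ) * poch (1/2-(c4:ℝ)-(r:ℝ)) i *
          poch (-κ - ((c1+c4+r : ℕ) : ℝ) - ((c2+c3+r : ℕ) : ℝ)) i * poch κ i *
          poch ((1/2 - ((c1+c4+r:ℕ):ℝ))+i) (c4-i) * poch ((1/2 - ((c2+c4+r:ℕ):ℝ))+i) (c4-i) *
          poch ((1/2 - ((c3+c4+r:ℕ):ℝ))+i) (c4-i)) /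
        (poch (1/2 - ((c1+c4+r:ℕ):ℝ)) c4 * poch (1/2 - ((c2+c4+r:ℕ):ℝ)) c4 *
          poch (1/2 - ((c3+c4+r:ℕ):ℝ)) c4) := by
    rw [Finset.sum_div]
    apply Finset.sum_congr rfl
    intro i hi
    have hi' : i ≤ c4 := by simpa [Nat.lt_succ_iff] using Finset.mem_range.mp hi
    have hden : (Nat.factorial i : ℝ) * poch (1/2 - ((c1+c4+r : ℕ) : ℝ)) i *
        poch (1/2 - ((c2+c4+r : ℕ) : ℝ)) i * poch (1/2 - ((c3+c4+r : ℕ) : ℝ)) i ≠ 0 :=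
      mul_ne_zero (mul_ne_zero (mul_ne_zero (hfac i) (hne1 i)) (hne2 i)) (hne3 i)
    have hC2 : poch (1/2 - ((c1+c4+r:ℕ):ℝ)) c4 * poch (1/2 - ((c2+c4+r:ℕ):ℝ)) c4 *
        poch (1/2 - ((c3+c4+r:ℕ):ℝ)) c4 ≠ 0 :=
      mul_ne_zero (mul_ne_zero (hne1 c4) (hne2 c4)) (hne3 c4)
    rw [div_eq_div_iff hden hC2]
    rw [conv4' i, poch_neg_nat c4 i hi']
    have split1 : poch (1/2 - ((c1+c4+r:ℕ):ℝ)) c4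
        = poch (1/2 - ((c1+c4+r:ℕ):ℝ)) i * poch ((1/2 - ((c1+c4+r:ℕ):ℝ))+(i:ℝ)) (c4-i) := by
      have h0 := poch_add (1/2 - ((c1+c4+r:ℕ):ℝ)) i (c4-i)
      rw [show i + (c4-i) = c4 from by omega] at h0
      exact h0
    have split2 : poch (1/2 - ((c2+c4+r:ℕ):ℝ)) c4
        = poch (1/2 - ((c2+c4+r:ℕ):ℝ)) i * poch ((1/2 - ((c2+c4+r:ℕ):ℝ))+(i:ℝ)) (c4-i) := by
      have h0 := poch_add (1/2 - ((c2+c4+r:ℕ):ℝ)) i (c4-i)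
      rw [show i + (c4-i) = c4 from by omega] at h0
      exact h0
    have split3 : poch (1/2 - ((c3+c4+r:ℕ):ℝ)) c4
        = poch (1/2 - ((c3+c4+r:ℕ):ℝ)) i * poch ((1/2 - ((c3+c4+r:ℕ):ℝ))+(i:ℝ)) (c4-i) := by
      have h0 := poch_add (1/2 - ((c3+c4+r:ℕ):ℝ)) i (c4-i)
      rw [show i + (c4-i) = c4 from by omega] at h0
      exact h0
    rw [split1, split2, split3]
    ring
  rw [hRHS]
  -- apply MAIN
  have main := MAIN c4 c3 κ (1/2-(c4:ℝ)-(r:ℝ)) (1/2-(c3:ℝ)-(r:ℝ))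
      (1/2 - ((c2+c3+r:ℕ):ℝ)) (1/2 - ((c1+c4+r:ℕ):ℝ)) (1/2 - ((c2+c4+r:ℕ):ℝ))
      (1/2 - ((c3+c4+r:ℕ):ℝ)) (κ+1/2+(c2:ℝ)+(r:ℝ)) (κ+1/2+(c3:ℝ)+(r:ℝ))
      (κ+1/2+(c2:ℝ)+(c3:ℝ)+(r:ℝ)) (-κ - ((c1+c4+r : ℕ) : ℝ) - ((c2+c3+r : ℕ) : ℝ))
      (by push_cast; ring) (by push_cast; ring) (by push_cast; ring) (by push_cast; ring)
      (by push_cast; ring) (by push_cast; ring) (by push_cast; ring)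
  -- nonvanishing of the grouped constants
  have hC1ne : poch (1/2 - ((c1+c4+r:ℕ):ℝ)) c4 * poch (1/2 - ((c2+c3+r:ℕ):ℝ)) c3 *
      poch (1/2 - ((c3+c4+r:ℕ):ℝ)) (c4+c3) ≠ 0 :=
    mul_ne_zero (mul_ne_zero (hne1 c4) (hne0 c3)) (hne3 (c4+c3))
  have hC2ne : poch (1/2 - ((c1+c4+r:ℕ):ℝ)) c4 * poch (1/2 - ((c2+c4+r:ℕ):ℝ)) c4 *
      poch (1/2 - ((c3+c4+r:ℕ):ℝ)) c4 ≠ 0 :=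
    mul_ne_zero (mul_ne_zero (hne1 c4) (hne2 c4)) (hne3 c4)
  have hhalfpos : ∀ k : ℕ, (0:ℝ) < poch (1/2) k := fun k => poch_pos (by norm_num) k
  have hdecomp2 : poch (κ+1/2) (c2+c4+r)
      = poch (κ+1/2) (c2+r) * poch (κ+1/2+(c2:ℝ)+(r:ℝ)) c4 := by
    have h0 := poch_add (κ+1/2) (c2+r) c4
    rw [show (c2+r)+c4 = c2+c4+r from by omega] at h0
    rw [show (κ+1/2)+((c2+r:ℕ):ℝ) = κ+1/2+(c2:ℝ)+(r:ℝ) from by push_cast; ring] at h0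
    exact h0
  have hA2ne : poch (κ+1/2+(c2:ℝ)+(r:ℝ)) c4 ≠ 0 := by
    intro h
    apply hκ
    rw [hdecomp2, h, mul_zero]
  -- the constant identity
  have hdecomp0 : poch (κ+1/2) (c2+c3+r)
      = poch (κ+1/2) (c2+r) * poch (κ+1/2+(c2:ℝ)+(r:ℝ)) c3 := by
    have h0 := poch_add (κ+1/2) (c2+r) c3
    rw [show (c2+r)+c3 = c2+c3+r from by omega] at h0
    rw [show (κ+1/2)+((c2+r:ℕ):ℝ) = κ+1/2+(c2:ℝ)+(r:ℝ) from by push_cast; ring] at h0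
    exact h0
  have rev0 : poch ((1/2 - ((c2+c3+r:ℕ):ℝ))-κ) c3
      = (-1:ℝ)^c3 * poch (κ+1/2+(c2:ℝ)+(r:ℝ)) c3 := by
    have h0 := poch_reverse ((1/2 - ((c2+c3+r:ℕ):ℝ))-κ) c3
    rw [show 1-((1/2 - ((c2+c3+r:ℕ):ℝ))-κ)-(c3:ℝ) = κ+1/2+(c2:ℝ)+(r:ℝ) from by
      push_cast; ring] at h0
    exact h0
  have rq3 : poch (1/2 - ((c3+c4+r:ℕ):ℝ)) (c4+c3)
      = poch (1/2 - ((c3+c4+r:ℕ):ℝ)) c4 * poch (1/2-(c3:ℝ)-(r:ℝ)) c3 := by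
    have h0 := poch_add (1/2 - ((c3+c4+r:ℕ):ℝ)) c4 c3
    rw [show (1/2 - ((c3+c4+r:ℕ):ℝ))+(c4:ℝ) = 1/2-(c3:ℝ)-(r:ℝ) from by push_cast; ring] at h0
    exact h0
  have rq2 : poch (1/2 - ((c2+c4+r:ℕ):ℝ)) c4
      = (-1:ℝ)^c4 * poch (1/2+(c2:ℝ)+(r:ℝ)) c4 := by
    have h0 := poch_reverse (1/2 - ((c2+c4+r:ℕ):ℝ)) c4
    rw [show 1-(1/2 - ((c2+c4+r:ℕ):ℝ))-(c4:ℝ) = 1/2+(c2:ℝ)+(r:ℝ) from by push_cast; ring] at h0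
    exact h0
  have rq0 : poch (1/2 - ((c2+c3+r:ℕ):ℝ)) c3
      = (-1:ℝ)^c3 * poch (1/2+(c2:ℝ)+(r:ℝ)) c3 := by
    have h0 := poch_reverse (1/2 - ((c2+c3+r:ℕ):ℝ)) c3
    rw [show 1-(1/2 - ((c2+c3+r:ℕ):ℝ))-(c3:ℝ) = 1/2+(c2:ℝ)+(r:ℝ) from by push_cast; ring] at h0
    exact h0
  have rh2 : poch (1/2:ℝ) (c2+c4+r) = poch (1/2:ℝ) (c2+r) * poch (1/2+(c2:ℝ)+(r:ℝ)) c4 := by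
    have h0 := poch_add (1/2:ℝ) (c2+r) c4
    rw [show (c2+r)+c4 = c2+c4+r from by omega] at h0
    rw [show (1/2:ℝ)+((c2+r:ℕ):ℝ) = 1/2+(c2:ℝ)+(r:ℝ) from by push_cast; ring] at h0
    exact h0
  have rh0 : poch (1/2:ℝ) (c2+c3+r) = poch (1/2:ℝ) (c2+r) * poch (1/2+(c2:ℝ)+(r:ℝ)) c3 := by
    have h0 := poch_add (1/2:ℝ) (c2+r) c3
    rw [show (c2+r)+c3 = c2+c3+r from by omega] at h0
    rw [show (1/2:ℝ)+((c2+r:ℕ):ℝ) = 1/2+(c2:ℝ)+(r:ℝ) from by push_cast; ring] at h0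
    exact h0
  have h2c4 : (-1:ℝ)^c4 * (-1:ℝ)^c4 = 1 := by
    rw [← pow_add]
    exact Even.neg_one_pow ⟨c4, rfl⟩
  have CONST : (-1:ℝ)^c4 * poch (1/2-(c3:ℝ)-(r:ℝ)) c3 *
      poch ((1/2 - ((c2+c3+r:ℕ):ℝ))-κ) c3 *
      (poch (1/2:ℝ) (c2+c3+r) * poch (κ+1/2) (c2+c4+r) *
        (poch (1/2 - ((c1+c4+r:ℕ):ℝ)) c4 * poch (1/2 - ((c2+c4+r:ℕ):ℝ)) c4 *
          poch (1/2 - ((c3+c4+r:ℕ):ℝ)) c4))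
      = poch (κ+1/2+(c2:ℝ)+(r:ℝ)) c4 *
        (poch (κ+1/2) (c2+c3+r) * poch (1/2:ℝ) (c2+c4+r) *
          (poch (1/2 - ((c1+c4+r:ℕ):ℝ)) c4 * poch (1/2 - ((c2+c3+r:ℕ):ℝ)) c3 *
            poch (1/2 - ((c3+c4+r:ℕ):ℝ)) (c4+c3))) := by
    rw [rev0, rq3, rq2, rq0, rh2, rh0, hdecomp0, hdecomp2]
    linear_combination ((-1:ℝ)^c3 * poch (1/2-(c3:ℝ)-(r:ℝ)) c3 *
      poch (κ+1/2+(c2:ℝ)+(r:ℝ)) c3 * poch (1/2:ℝ) (c2+r) * poch (1/2+(c2:ℝ)+(r:ℝ)) c3 *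
      poch (κ+1/2) (c2+r) * poch (κ+1/2+(c2:ℝ)+(r:ℝ)) c4 * poch (1/2 - ((c1+c4+r:ℕ):ℝ)) c4 *
      poch (1/2+(c2:ℝ)+(r:ℝ)) c4 * poch (1/2 - ((c3+c4+r:ℕ):ℝ)) c4) * h2c4
  -- combine
  rw [div_mul_div_comm]
  rw [div_eq_div_iff hC1ne (mul_ne_zero (mul_ne_zero (ne_of_gt (hhalfpos (c2+c3+r))) hκ) hC2ne)]
  apply mul_left_cancel₀ hA2ne
  calc poch (κ+1/2+(c2:ℝ)+(r:ℝ)) c4 * ((∑ i ∈ range (c4+1), ∑ j ∈ range (c3+1),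
          (-1:ℝ)^(i+j) * (c4.choose i : ℝ) * (c3.choose j : ℝ) *
            poch (1/2-(c4:ℝ)-(r:ℝ)) i * poch (1/2-(c3:ℝ)-(r:ℝ)) j *
            poch κ (i+j) * poch ((1/2 - ((c1+c4+r:ℕ):ℝ))+i) (c4-i) *
            poch ((1/2 - ((c2+c3+r:ℕ):ℝ))+j) (c3-j) *
            poch ((1/2 - ((c3+c4+r:ℕ):ℝ))+i+j) (c4+c3-i-j)) *
        (poch (1/2:ℝ) (c2+c3+r) * poch (κ+1/2) (c2+c4+r) *
          (poch (1/2 - ((c1+c4+r:ℕ):ℝ)) c4 * poch (1/2 - ((c2+c4+r:ℕ):ℝ)) c4 *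
            poch (1/2 - ((c3+c4+r:ℕ):ℝ)) c4)))
      = (poch (κ+1/2+(c2:ℝ)+(r:ℝ)) c4 * (∑ i ∈ range (c4+1), ∑ j ∈ range (c3+1),
          (-1:ℝ)^(i+j) * (c4.choose i : ℝ) * (c3.choose j : ℝ) *
            poch (1/2-(c4:ℝ)-(r:ℝ)) i * poch (1/2-(c3:ℝ)-(r:ℝ)) j *
            poch κ (i+j) * poch ((1/2 - ((c1+c4+r:ℕ):ℝ))+i) (c4-i) *
            poch ((1/2 - ((c2+c3+r:ℕ):ℝ))+j) (c3-j) *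
            poch ((1/2 - ((c3+c4+r:ℕ):ℝ))+i+j) (c4+c3-i-j))) *
        (poch (1/2:ℝ) (c2+c3+r) * poch (κ+1/2) (c2+c4+r) *
          (poch (1/2 - ((c1+c4+r:ℕ):ℝ)) c4 * poch (1/2 - ((c2+c4+r:ℕ):ℝ)) c4 *
            poch (1/2 - ((c3+c4+r:ℕ):ℝ)) c4)) := by ring
    _ = ((-1:ℝ)^c4 * poch (1/2-(c3:ℝ)-(r:ℝ)) c3 * poch ((1/2 - ((c2+c3+r:ℕ):ℝ))-κ) c3 *
          (∑ i ∈ range (c4+1), (-1:ℝ)^i * (c4.choose i : ℝ) * poch (1/2-(c4:ℝ)-(r:ℝ)) i *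
            poch (-κ - ((c1+c4+r : ℕ) : ℝ) - ((c2+c3+r : ℕ) : ℝ)) i * poch κ i *
            poch ((1/2 - ((c1+c4+r:ℕ):ℝ))+i) (c4-i) * poch ((1/2 - ((c2+c4+r:ℕ):ℝ))+i) (c4-i) *
            poch ((1/2 - ((c3+c4+r:ℕ):ℝ))+i) (c4-i))) *
        (poch (1/2:ℝ) (c2+c3+r) * poch (κ+1/2) (c2+c4+r) *
          (poch (1/2 - ((c1+c4+r:ℕ):ℝ)) c4 * poch (1/2 - ((c2+c4+r:ℕ):ℝ)) c4 *
            poch (1/2 - ((c3+c4+r:ℕ):ℝ)) c4)) := by rw [main]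
    _ = poch (κ+1/2+(c2:ℝ)+(r:ℝ)) c4 * (poch (κ+1/2) (c2+c3+r) * poch (1/2:ℝ) (c2+c4+r) *
          (∑ i ∈ range (c4+1), (-1:ℝ)^i * (c4.choose i : ℝ) * poch (1/2-(c4:ℝ)-(r:ℝ)) i *
            poch (-κ - ((c1+c4+r : ℕ) : ℝ) - ((c2+c3+r : ℕ) : ℝ)) i * poch κ i *
            poch ((1/2 - ((c1+c4+r:ℕ):ℝ))+i) (c4-i) * poch ((1/2 - ((c2+c4+r:ℕ):ℝ))+i) (c4-i) *
            poch ((1/2 - ((c3+c4+r:ℕ):ℝ))+i) (c4-i)) *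
          (poch (1/2 - ((c1+c4+r:ℕ):ℝ)) c4 * poch (1/2 - ((c2+c3+r:ℕ):ℝ)) c3 *
            poch (1/2 - ((c3+c4+r:ℕ):ℝ)) (c4+c3))) := by
        linear_combination (∑ i ∈ range (c4+1), (-1:ℝ)^i * (c4.choose i : ℝ) *
          poch (1/2-(c4:ℝ)-(r:ℝ)) i *
          poch (-κ - ((c1+c4+r : ℕ) : ℝ) - ((c2+c3+r : ℕ) : ℝ)) i * poch κ i *
          poch ((1/2 - ((c1+c4+r:ℕ):ℝ))+i) (c4-i) * poch ((1/2 - ((c2+c4+r:ℕ):ℝ))+i) (c4-i) *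
          poch ((1/2 - ((c3+c4+r:ℕ):ℝ))+i) (c4-i)) * CONST
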